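/- Boundary point lemma for highest waves: let F : ℝ → ℝ be real analytic with F(0) = 0 and F′(0) = −c for some c > 0, let B ∈ ℝ, and let λ ∈ ℝ. Let φ, φ̃ : ℝ → ℝ be continuous, 2π-periodic, with zero mean, both satisfying F(ψ(x)) = −(K∗ψ)(x) + B for all x ∈ ℝ (with the same constant B). Assume φ(x) ≥ φ̃(x) for all x ∈ [λ, λ+π], that φ − φ̃ is odd with respect to λ (i.e., (φ − φ̃)(2λ − x) = −(φ − φ̃)(x) for all x), and that φ(λ) = φ̃(λ) = φ̄ where φ̄ ≠ 0, F′(φ̄) = 0, there exists n ≥ 2 with F^{(n)}(φ̄) ≠ 0, and both φ and φ̃ have an isolated local extremum at λ. Then φ = φ̃ on all of ℝ. -/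

import Mathlib

open Real MeasureTheory Filter

/-- The 2π-periodic kernel of `D⁻²`, equal to `(1/(4π))(|x|−π)² − π/12` on `[−π,π]`. -/
noncomputable def Kper (x : ℝ) : ℝ :=
  (1 / (4 * π)) * (|x - 2 * π * ((round (x / (2 * π)) : ℤ) : ℝ)| - π) ^ 2 - π / 12

/-- Periodic convolution with the kernel `Kper`. -/
noncomputable def Kconv (φ : ℝ → ℝ) (x : ℝ) : ℝ :=
  ∫ y in (-π)..π, Kper (x - y) * φ y

namespace BPL

noncomputable def dper (x : ℝ) : ℝ := |x - 2 * π * ((round (x / (2 * π)) : ℤ) : ℝ)|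

lemma Kper_eq (x : ℝ) : Kper x = (1 / (4 * π)) * (dper x - π) ^ 2 - π / 12 := rfl

lemma round_nearest (x : ℝ) (m : ℤ) : |x - round x| ≤ |x - m| := by
  rw [abs_sub_round_eq_min]
  have hf : Int.fract x = x - ⌊x⌋ := rfl
  rcases le_or_gt (m : ℝ) (⌊x⌋ : ℝ) with h | h
  · calc min (Int.fract x) (1 - Int.fract x) ≤ Int.fract x := min_le_left _ _
      _ ≤ x - m := by rw [hf]; linarith
      _ ≤ |x - m| := le_abs_self _
  · have hm : (⌊x⌋ : ℝ) + 1 ≤ (m : ℝ) := by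
      exact_mod_cast Int.add_one_le_iff.mpr (by exact_mod_cast h)
    have hfr : Int.fract x < 1 := Int.fract_lt_one x
    calc min (Int.fract x) (1 - Int.fract x) ≤ 1 - Int.fract x := min_le_right _ _
      _ ≤ (m : ℝ) - x := by rw [hf]; linarith
      _ ≤ |x - m| := by rw [abs_sub_comm]; exact le_abs_self _

lemma dper_eq' (x : ℝ) : dper x = 2 * π * |x / (2 * π) - (round (x / (2 * π)) : ℝ)| := by
  have h2π : (0:ℝ) < 2 * π := by positivity
  have h : x - 2 * π * ((round (x / (2 * π)) : ℤ) : ℝ) =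
      (2 * π) * (x / (2 * π) - ((round (x / (2 * π)) : ℤ) : ℝ)) := by field_simp
  rw [dper, h, abs_mul, abs_of_pos h2π]

lemma dper_le_pi (x : ℝ) : dper x ≤ π := by
  rw [dper_eq']
  have := abs_sub_round (x / (2 * π))
  nlinarith [pi_pos]

lemma dper_nonneg (x : ℝ) : 0 ≤ dper x := abs_nonneg _

lemma dper_le_int (x : ℝ) (m : ℤ) : dper x ≤ |x - 2 * π * m| := by
  have h2π : (0:ℝ) < 2 * π := by positivity
  have h : |x - 2 * π * m| = 2 * π * |x / (2 * π) - (m : ℝ)| := by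
    have h' : x - 2 * π * (m : ℝ) = (2 * π) * (x / (2 * π) - (m : ℝ)) := by field_simp
    rw [h', abs_mul, abs_of_pos h2π]
  rw [dper_eq', h]
  have := round_nearest (x / (2 * π)) m
  nlinarith [pi_pos]

lemma dper_lip (a b : ℝ) : |dper a - dper b| ≤ |a - b| := by
  rw [abs_sub_le_iff]
  constructor
  · have h1 : dper a ≤ |a - 2 * π * (round (b / (2*π)) : ℤ)| := dper_le_int a _
    have h2 : |a - 2 * π * (round (b / (2*π)) : ℤ)| ≤ |a - b| + |b - 2 * π * ((round (b / (2*π)) : ℤ) : ℝ)| := by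
      have : a - 2 * π * ((round (b / (2*π)) : ℤ) : ℝ) =
          (a - b) + (b - 2 * π * ((round (b / (2*π)) : ℤ) : ℝ)) := by ring
      rw [this]; exact abs_add_le _ _
    have hd : dper b = |b - 2 * π * ((round (b / (2*π)) : ℤ) : ℝ)| := rfl
    linarith
  · have h1 : dper b ≤ |b - 2 * π * (round (a / (2*π)) : ℤ)| := dper_le_int b _
    have h2 : |b - 2 * π * (round (a / (2*π)) : ℤ)| ≤ |b - a| + |a - 2 * π * ((round (a / (2*π)) : ℤ) : ℝ)| := by
      have : b - 2 * π * ((round (a / (2*π)) : ℤ) : ℝ) =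
          (b - a) + (a - 2 * π * ((round (a / (2*π)) : ℤ) : ℝ)) := by ring
      rw [this]; exact abs_add_le _ _
    have hd : dper a = |a - 2 * π * ((round (a / (2*π)) : ℤ) : ℝ)| := rfl
    rw [abs_sub_comm b a] at h2
    linarith

lemma Kper_lip (a b : ℝ) : |Kper a - Kper b| ≤ (1/2) * |a - b| := by
  have hπ := pi_pos
  rw [Kper_eq, Kper_eq]
  have h : (1 / (4 * π)) * (dper a - π) ^ 2 - π / 12 -
      ((1 / (4 * π)) * (dper b - π) ^ 2 - π / 12) =
      (1 / (4 * π)) * ((dper a - dper b) * (dper a + dper b - 2 * π)) := by ring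
  rw [h, abs_mul, abs_mul, abs_of_pos (by positivity : (0:ℝ) < 1 / (4*π))]
  have h1 : |dper a - dper b| ≤ |a - b| := dper_lip a b
  have h2 : |dper a + dper b - 2 * π| ≤ 2 * π := by
    rw [abs_le]
    constructor <;> nlinarith [dper_le_pi a, dper_le_pi b, dper_nonneg a, dper_nonneg b]
  have h3 : (0:ℝ) ≤ |a - b| := abs_nonneg _
  calc 1 / (4*π) * (|dper a - dper b| * |dper a + dper b - 2*π|)
      ≤ 1 / (4*π) * (|a - b| * (2*π)) := by
        apply mul_le_mul_of_nonneg_left _ (by positivity)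
        exact mul_le_mul h1 h2 (abs_nonneg _) h3
    _ = (1/2) * |a - b| := by field_simp; ring

lemma Kper_bound (x : ℝ) : |Kper x| ≤ π / 3 := by
  have hπ := pi_pos
  rw [Kper_eq, abs_le]
  have h1 := dper_le_pi x
  have h2 := dper_nonneg x
  have h3 : 0 ≤ (dper x - π)^2 := sq_nonneg _
  have h4 : (dper x - π)^2 ≤ π^2 := by nlinarith
  constructor
  · have : 0 ≤ (1 / (4*π)) * (dper x - π)^2 := by positivity
    nlinarith
  · have h5 : (1 / (4*π)) * (dper x - π)^2 ≤ (1 / (4*π)) * π^2 :=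
      mul_le_mul_of_nonneg_left h4 (by positivity)
    have h6 : (1 / (4*π)) * π^2 = π/4 := by field_simp
    nlinarith

lemma measurable_roundcast : Measurable fun x : ℝ => ((round (x / (2 * π)) : ℤ) : ℝ) := by
  have h0 : Measurable fun x : ℝ => (⌊x / (2*π) + 1/2⌋ : ℤ) :=
    ((measurable_id.div_const _).add_const _).floor
  have h : (fun x : ℝ => ((round (x / (2 * π)) : ℤ) : ℝ)) =
      (fun k : ℤ => (k : ℝ)) ∘ (fun x : ℝ => (⌊x / (2*π) + 1/2⌋ : ℤ)) := by
    funext x; simp [round_eq]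
  rw [h]
  exact (measurable_from_top).comp h0

lemma measurable_Kper : Measurable Kper := by
  have h2 : Measurable fun x : ℝ => x - 2 * π * ((round (x / (2 * π)) : ℤ) : ℝ) :=
    measurable_id.sub (measurable_const.mul measurable_roundcast)
  unfold Kper
  exact (((h2.abs.sub measurable_const).pow measurable_const).const_mul _).sub measurable_const

lemma Kper_periodic : Function.Periodic Kper (2 * π) := by
  intro x
  have hr : round ((x + 2 * π) / (2 * π)) = round (x / (2 * π)) + 1 := by
    have h : (x + 2 * π) / (2 * π) = x / (2 * π) + 1 := by
      field_simp
    rw [h, round_add_one]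
  unfold Kper
  rw [hr]
  have harg : x + 2 * π - 2 * π * (((round (x / (2 * π)) + 1 : ℤ)) : ℝ) =
      x - 2 * π * ((round (x / (2 * π)) : ℤ) : ℝ) := by push_cast; ring
  rw [harg]

lemma round_half_mem {r : ℝ} (h1 : -(1/2) ≤ r) (h2 : r < 1/2) : round r = 0 := by
  rw [round_eq]
  apply Int.floor_eq_iff.mpr
  constructor
  · simp; linarith
  · push_cast; linarith

lemma round_half_mem' {r : ℝ} (h1 : 1/2 ≤ r) (h2 : r < 3/2) : round r = 1 := by
  rw [round_eq]
  apply Int.floor_eq_iff.mpr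
  constructor
  · push_cast; linarith
  · push_cast; linarith

lemma dper_eval₁ {t : ℝ} (h1 : -π ≤ t) (h2 : t ≤ π) : dper t = |t| := by
  have hπ := pi_pos
  have h2π : (0:ℝ) < 2 * π := by positivity
  rcases lt_or_eq_of_le h2 with h | h
  · have hr : round (t / (2 * π)) = 0 := by
      apply round_half_mem
      · rw [neg_le, ← neg_div, div_le_iff₀ h2π]
        linarith
      · exact (div_lt_iff₀ h2π).mpr (by linarith)
    rw [dper, hr]
    norm_num
  · subst h
    have hr : round (π / (2 * π)) = 1 := by
      apply round_half_mem'
      · rw [le_div_iff₀ h2π]; linarith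
      · rw [div_lt_iff₀ h2π]; nlinarith
    rw [dper, hr]
    push_cast
    rw [abs_of_nonpos (by linarith), abs_of_nonneg (by linarith)]
    ring

lemma dper_sq_eval₂ {t : ℝ} (h1 : 0 ≤ t) (h2 : t ≤ 2 * π) : (dper t - π)^2 = (t - π)^2 := by
  have hπ := pi_pos
  have h2π : (0:ℝ) < 2 * π := by positivity
  rcases le_total t π with h | h
  · rw [dper_eval₁ (by linarith) h, abs_of_nonneg h1]
  · have hr : round (t / (2 * π)) = 1 := by
      apply round_half_mem'
      · rw [le_div_iff₀ h2π]; linarith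
      · rw [div_lt_iff₀ h2π]; nlinarith
    rw [dper, hr]
    push_cast
    rw [abs_of_nonpos (by linarith)]
    ring

lemma Kper_eval₁ {t : ℝ} (h1 : -π ≤ t) (h2 : t ≤ π) :
    Kper t = (1 / (4 * π)) * (|t| - π) ^ 2 - π / 12 := by
  rw [Kper_eq, dper_eval₁ h1 h2]

lemma Kper_eval₂ {t : ℝ} (h1 : 0 ≤ t) (h2 : t ≤ 2 * π) :
    Kper t = (1 / (4 * π)) * (t - π) ^ 2 - π / 12 := by
  rw [Kper_eq, dper_sq_eval₂ h1 h2]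

lemma Kper_diff {u v : ℝ} (hu0 : 0 ≤ u) (huπ : u ≤ π) (hv0 : 0 ≤ v) (hvπ : v ≤ π) :
    Kper (u - v) - Kper (u + v) = min u v - u * v / π := by
  have hπ := pi_pos
  rw [Kper_eval₁ (by linarith) (by linarith), Kper_eval₂ (by linarith) (by linarith)]
  rcases le_total u v with h | h
  · rw [abs_of_nonpos (by linarith), min_eq_left h]
    field_simp
    ring
  · rw [abs_of_nonneg (by linarith), min_eq_right h]
    field_simp
    ring

lemma gker_nonneg {u v : ℝ} (hu0 : 0 ≤ u) (huπ : u ≤ π) (hv0 : 0 ≤ v) (hvπ : v ≤ π) :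
    0 ≤ min u v - u * v / π := by
  have hπ := pi_pos
  rcases le_total u v with h | h
  · rw [min_eq_left h, sub_nonneg, div_le_iff₀ hπ]
    nlinarith
  · rw [min_eq_right h, sub_nonneg, div_le_iff₀ hπ]
    nlinarith

noncomputable def Qd (x : ℝ) : ℝ :=
  (1 / (2 * π)) * (dper x - π) * Real.sign (x - 2 * π * ((round (x / (2 * π)) : ℤ) : ℝ))

lemma measurable_sign : Measurable Real.sign := by
  have h : Real.sign = fun r : ℝ => if r < 0 then (-1:ℝ) else if 0 < r then 1 else 0 := by
    funext r; rfl
  rw [h]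
  refine Measurable.ite ?_ measurable_const (Measurable.ite ?_ measurable_const measurable_const)
  · exact measurableSet_Iio (a := (0:ℝ))
  · exact measurableSet_Ioi (a := (0:ℝ))

lemma measurable_Qd : Measurable Qd := by
  have h2 : Measurable fun x : ℝ => x - 2 * π * ((round (x / (2 * π)) : ℤ) : ℝ) :=
    measurable_id.sub (measurable_const.mul measurable_roundcast)
  exact ((h2.abs.sub measurable_const).const_mul _).mul (measurable_sign.comp h2)

lemma intervalIntegrable_Kper_mul {ψ : ℝ → ℝ} (hψ : Continuous ψ) (x a b : ℝ) :
    IntervalIntegrable (fun y => Kper (x - y) * ψ y) volume a b := by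
  rw [intervalIntegrable_iff]
  obtain ⟨C, hC⟩ := (isCompact_uIcc (a := a) (b := b)).exists_bound_of_continuousOn
    hψ.continuousOn
  have hmeas : Measurable fun y => Kper (x - y) * ψ y :=
    (measurable_Kper.comp (measurable_const.sub measurable_id)).mul hψ.measurable
  apply Measure.integrableOn_of_bounded (M := (π/3) * C)
  · rw [Set.uIoc]; exact measure_Ioc_lt_top.ne
  · exact hmeas.aestronglyMeasurable
  · refine (ae_restrict_iff' measurableSet_uIoc).mpr (Eventually.of_forall fun y hy => ?_)
    have h1 := Kper_bound (x - y)
    have h2 := hC y (Set.uIoc_subset_uIcc hy)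
    have h3 : (0:ℝ) ≤ C := le_trans (norm_nonneg _) h2
    rw [Real.norm_eq_abs, abs_mul]
    exact mul_le_mul h1 (by simpa using h2) (abs_nonneg _) (by positivity)

lemma intervalIntegrable_Kper_mul' {ψ : ℝ → ℝ} (hψ : Continuous ψ) (x a b : ℝ) :
    IntervalIntegrable (fun y => Kper (x + y) * ψ y) volume a b := by
  rw [intervalIntegrable_iff]
  obtain ⟨C, hC⟩ := (isCompact_uIcc (a := a) (b := b)).exists_bound_of_continuousOn
    hψ.continuousOn
  have hmeas : Measurable fun y => Kper (x + y) * ψ y :=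
    (measurable_Kper.comp (measurable_const.add measurable_id)).mul hψ.measurable
  apply Measure.integrableOn_of_bounded (M := (π/3) * C)
  · rw [Set.uIoc]; exact measure_Ioc_lt_top.ne
  · exact hmeas.aestronglyMeasurable
  · refine (ae_restrict_iff' measurableSet_uIoc).mpr (Eventually.of_forall fun y hy => ?_)
    have h1 := Kper_bound (x + y)
    have h2 := hC y (Set.uIoc_subset_uIcc hy)
    have h3 : (0:ℝ) ≤ C := le_trans (norm_nonneg _) h2
    rw [Real.norm_eq_abs, abs_mul]
    exact mul_le_mul h1 (by simpa using h2) (abs_nonneg _) (by positivity)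

lemma hasDerivAt_Kper_shift {y x₀ : ℝ} (h : ∀ k : ℤ, x₀ - y ≠ π * k) :
    HasDerivAt (fun x => Kper (x - y)) (Qd (x₀ - y)) x₀ := by
  have hπ := pi_pos
  have h2π : (0:ℝ) < 2*π := by positivity
  set z₀ := x₀ - y with hz₀
  set r₀ : ℤ := round (z₀ / (2 * π)) with hr₀
  have hs : z₀ - 2 * π * (r₀:ℝ) ≠ 0 := by
    intro hzero
    exact h (2 * r₀) (by push_cast; linarith)
  have hlow : (r₀ : ℝ) < z₀ / (2*π) + 1/2 := by
    rcases lt_or_eq_of_le (Int.floor_le (z₀ / (2*π) + 1/2)) with h' | h'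
    · rwa [← round_eq] at h'
    · exfalso
      apply h (2 * r₀ - 1)
      have hc : (((⌊z₀ / (2*π) + 1/2⌋ : ℤ)) : ℝ) = (r₀ : ℝ) := by rw [← round_eq]
      rw [hc] at h'
      have : z₀ = 2 * π * (r₀:ℝ) - π := by
        field_simp at h' ⊢
        linarith
      push_cast
      linarith
  have hhigh : z₀ / (2*π) + 1/2 < (r₀ : ℝ) + 1 := by
    have := Int.lt_floor_add_one (z₀ / (2*π) + 1/2)
    rwa [← round_eq] at this
  have hev : ∀ᶠ z in nhds z₀, round (z / (2*π)) = r₀ := by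
    have hcont : Continuous fun z : ℝ => z / (2*π) + 1/2 := by continuity
    have hev0 : ∀ᶠ z in nhds z₀, z / (2*π) + 1/2 ∈ Set.Ioo ((r₀:ℝ)) ((r₀:ℝ)+1) :=
      (hcont.continuousAt).preimage_mem_nhds (isOpen_Ioo.mem_nhds ⟨hlow, hhigh⟩)
    refine hev0.mono fun z hz => ?_
    rw [round_eq]
    refine Int.floor_eq_iff.mpr ⟨le_of_lt hz.1, by push_cast; exact hz.2⟩
  rcases lt_or_gt_of_ne hs with hneg | hpos
  · have hev2 : ∀ᶠ z in nhds z₀,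
        Kper z = (1 / (4*π)) * (-(z - 2 * π * (r₀:ℝ)) - π)^2 - π/12 := by
      have hevs : ∀ᶠ z in nhds z₀, z - 2 * π * (r₀:ℝ) < 0 :=
        (continuous_id.sub continuous_const).continuousAt.preimage_mem_nhds
          (isOpen_Iio.mem_nhds (by simpa using hneg))
      filter_upwards [hev, hevs] with z h1 h2
      rw [Kper, h1, abs_of_neg h2]
    have hP : HasDerivAt (fun z : ℝ => (1 / (4*π)) * (-(z - 2 * π * (r₀:ℝ)) - π)^2 - π/12)
        ((1 / (2*π)) * (-(z₀ - 2 * π * (r₀:ℝ)) - π) * (-1)) z₀ := by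
      have h1 : HasDerivAt (fun z : ℝ => -(z - 2 * π * (r₀:ℝ)) - π) (-1) z₀ := by
        have := (((hasDerivAt_id z₀).sub_const (2 * π * (r₀:ℝ))).neg).sub_const π
        simpa using this
      have h2 := ((h1.pow 2).const_mul ((1:ℝ) / (4*π))).sub_const (π/12)
      refine HasDerivAt.congr_deriv h2 ?_
      field_simp
      ring
    have hK : HasDerivAt Kper ((1 / (2*π)) * (-(z₀ - 2 * π * (r₀:ℝ)) - π) * (-1)) z₀ :=
      hP.congr_of_eventuallyEq hev2
    have hval : Qd z₀ = (1 / (2*π)) * (-(z₀ - 2 * π * (r₀:ℝ)) - π) * (-1) := by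
      rw [Qd, Real.sign_of_neg hneg]
      have hd : dper z₀ = -(z₀ - 2 * π * (r₀:ℝ)) := abs_of_neg hneg
      rw [hd]
    rw [← hval] at hK
    have hcomp := hK.comp x₀ ((hasDerivAt_id x₀).sub_const y)
    simpa [Function.comp_def] using hcomp
  · have hev2 : ∀ᶠ z in nhds z₀,
        Kper z = (1 / (4*π)) * ((z - 2 * π * (r₀:ℝ)) - π)^2 - π/12 := by
      have hevs : ∀ᶠ z in nhds z₀, 0 < z - 2 * π * (r₀:ℝ) :=
        (continuous_id.sub continuous_const).continuousAt.preimage_mem_nhds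
          (isOpen_Ioi.mem_nhds (by simpa using hpos))
      filter_upwards [hev, hevs] with z h1 h2
      rw [Kper, h1, abs_of_pos h2]
    have hP : HasDerivAt (fun z : ℝ => (1 / (4*π)) * ((z - 2 * π * (r₀:ℝ)) - π)^2 - π/12)
        ((1 / (2*π)) * ((z₀ - 2 * π * (r₀:ℝ)) - π) * 1) z₀ := by
      have h1 : HasDerivAt (fun z : ℝ => (z - 2 * π * (r₀:ℝ)) - π) (1) z₀ :=
        ((hasDerivAt_id z₀).sub_const _).sub_const _
      have h2 := ((h1.pow 2).const_mul ((1:ℝ) / (4*π))).sub_const (π/12)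
      refine HasDerivAt.congr_deriv h2 ?_
      field_simp
      ring
    have hK : HasDerivAt Kper ((1 / (2*π)) * ((z₀ - 2 * π * (r₀:ℝ)) - π) * 1) z₀ :=
      hP.congr_of_eventuallyEq hev2
    have hval : Qd z₀ = (1 / (2*π)) * ((z₀ - 2 * π * (r₀:ℝ)) - π) * 1 := by
      rw [Qd, Real.sign_of_pos hpos]
      have hd : dper z₀ = z₀ - 2 * π * (r₀:ℝ) := abs_of_pos hpos
      rw [hd]
    rw [← hval] at hK
    have hcomp := hK.comp x₀ ((hasDerivAt_id x₀).sub_const y)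
    simpa [Function.comp_def] using hcomp

lemma hasDerivAt_Kconv {ψ : ℝ → ℝ} (hψ : Continuous ψ) (x₀ : ℝ) :
    HasDerivAt (Kconv ψ) (∫ y in (-π)..π, Qd (x₀ - y) * ψ y) x₀ := by
  have hπ := pi_pos
  have hbad : ∀ᵐ t : ℝ, ∀ k : ℤ, x₀ - t ≠ π * k := by
    have h0 : volume (Set.range fun k : ℤ => x₀ - π * k) = 0 :=
      Set.Countable.measure_zero (Set.countable_range _) _
    rw [ae_iff]
    refine measure_mono_null ?_ h0
    intro t ht
    simp only [Set.mem_setOf_eq, not_forall, not_ne_iff] at ht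
    obtain ⟨k, hk⟩ := ht
    exact ⟨k, by simp only []; linarith⟩
  have key := intervalIntegral.hasDerivAt_integral_of_dominated_loc_of_lip
    (F := fun x t => Kper (x - t) * ψ t) (F' := fun t => Qd (x₀ - t) * ψ t)
    (bound := fun t => (1/2) * |ψ t|) (a := -π) (b := π) (x₀ := x₀) (s := Metric.ball x₀ 1)
    (Metric.ball_mem_nhds x₀ one_pos)
    (Eventually.of_forall fun x =>
      (((measurable_Kper.comp (measurable_const.sub measurable_id)).mul
        hψ.measurable).aestronglyMeasurable))
    (intervalIntegrable_Kper_mul hψ x₀ (-π) π)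
    (((measurable_Qd.comp (measurable_const.sub measurable_id)).mul
        hψ.measurable).aestronglyMeasurable)
    (Eventually.of_forall fun t _ => ?_)
    (((continuous_const.mul hψ.abs)).intervalIntegrable _ _)
    (hbad.mono fun t ht _ => (hasDerivAt_Kper_shift ht).mul_const (ψ t))
  · exact key.2
  · rw [lipschitzOnWith_iff_dist_le_mul]
    intro x hx x' hx'
    rw [Real.dist_eq, Real.dist_eq]
    have h1 : Kper (x - t) * ψ t - Kper (x' - t) * ψ t =
        (Kper (x - t) - Kper (x' - t)) * ψ t := by ring
    rw [h1, abs_mul]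
    have h2 : |Kper (x - t) - Kper (x' - t)| ≤ (1/2) * |x - x'| := by
      have := Kper_lip (x - t) (x' - t)
      have harg : x - t - (x' - t) = x - x' := by ring
      rwa [harg] at this
    have h3 : ((Real.nnabs ((1/2) * |ψ t|)) : ℝ) = (1/2) * |ψ t| := by
      rw [Real.coe_nnabs, abs_of_nonneg (by positivity)]
    rw [h3]
    calc |Kper (x - t) - Kper (x' - t)| * |ψ t| ≤ ((1/2) * |x - x'|) * |ψ t| :=
          mul_le_mul_of_nonneg_right h2 (abs_nonneg _)
      _ = (1/2) * |ψ t| * |x - x'| := by ring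

lemma iteratedDeriv_const' : ∀ (n : ℕ) (c x : ℝ), iteratedDeriv (n + 1) (fun _ : ℝ => c) x = 0 := by
  intro n
  induction n with
  | zero => intro c x; rw [iteratedDeriv_one]; simp
  | succ m ih =>
    intro c x
    rw [iteratedDeriv_succ']
    have : deriv (fun _ : ℝ => c) = fun _ : ℝ => (0:ℝ) := by
      funext z; simp
    rw [this]
    exact ih 0 x

lemma same_sign_of_no_zero {H : ℝ → ℝ} (hc : Continuous H) {a b : ℝ}
    (hne : ∀ t ∈ Set.Ioo a b, H t ≠ 0) :
    ∀ s ∈ Set.Ioo a b, ∀ t ∈ Set.Ioo a b, (0 < H s ↔ 0 < H t) := by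
  have key : ∀ s ∈ Set.Ioo a b, ∀ t ∈ Set.Ioo a b, 0 < H s → 0 < H t := by
    intro s hs t ht hHs
    by_contra hHt
    push_neg at hHt
    have hHt' : H t < 0 := lt_of_le_of_ne hHt (hne t ht)
    have h0 : (0:ℝ) ∈ Set.uIcc (H s) (H t) := by
      rw [Set.mem_uIcc]
      right
      exact ⟨le_of_lt hHt', le_of_lt hHs⟩
    obtain ⟨r, hr, hr0⟩ := intermediate_value_uIcc (hc.continuousOn) h0
    have hrm : r ∈ Set.Ioo a b := Set.ordConnected_Ioo.uIcc_subset hs ht hr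
    exact hne r hrm hr0
  intro s hs t ht
  exact ⟨key s hs t ht, key t ht s hs⟩

lemma Wf_formula {w : ℝ → ℝ} (hw : Continuous w) (hper : Function.Periodic w (2 * π))
    {l : ℝ} (hodd : ∀ v : ℝ, w (l - v) = -w (l + v)) {u : ℝ} (hu0 : 0 ≤ u) (huπ : u ≤ π) :
    (∫ y in (-π)..π, Kper (l + u - y) * w y)
      = ∫ v in (0:ℝ)..π, (min u v - u * v / π) * w (l + v) := by
  have hπ := pi_pos
  have hwshift : Continuous fun v : ℝ => w (l + v) :=
    hw.comp (continuous_const.add continuous_id)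
  have h1 : (∫ y in (-π)..π, Kper (l + u - y) * w y)
      = ∫ v in (-π - l)..(π - l), Kper (u - v) * w (l + v) := by
    have h := intervalIntegral.integral_comp_add_right (a := -π - l) (b := π - l)
      (f := fun y => Kper (l + u - y) * w y) l
    rw [show -π - l + l = -π by ring, show π - l + l = π by ring] at h
    rw [← h]
    apply intervalIntegral.integral_congr
    intro v _
    show Kper (l + u - (v + l)) * w (v + l) = Kper (u - v) * w (l + v)
    rw [show l + u - (v + l) = u - v by ring, add_comm v l]
  have hg_per : Function.Periodic (fun v => Kper (u - v) * w (l + v)) (2 * π) := by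
    intro v
    have hK : Kper (u - (v + 2*π)) = Kper (u - v) := by
      have := Kper_periodic (u - v - 2*π)
      rw [show u - v - 2*π + 2*π = u - v by ring] at this
      rw [show u - (v + 2*π) = u - v - 2*π by ring, this]
    have hw2 : w (l + (v + 2*π)) = w (l + v) := by
      have := hper (l + v)
      rw [show l + v + 2*π = l + (v + 2*π) by ring] at this
      exact this
    simp only [hK, hw2]
  have h2 : (∫ v in (-π - l)..(π - l), Kper (u - v) * w (l + v))
      = ∫ v in (-π)..π, Kper (u - v) * w (l + v) := by
    have h := hg_per.intervalIntegral_add_eq (-π - l) (-π)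
    rw [show -π - l + 2*π = π - l by ring, show -π + 2*π = π by ring] at h
    exact h
  have hint : ∀ a b : ℝ, IntervalIntegrable (fun v => Kper (u - v) * w (l + v)) volume a b :=
    fun a b => intervalIntegrable_Kper_mul hwshift u a b
  have hint' : ∀ a b : ℝ, IntervalIntegrable (fun v => -(Kper (u + v) * w (l + v))) volume a b :=
    fun a b => (intervalIntegrable_Kper_mul' hwshift u a b).neg
  have h3 : (∫ v in (-π)..π, Kper (u - v) * w (l + v))
      = (∫ v in (-π)..(0:ℝ), Kper (u - v) * w (l + v))
        + ∫ v in (0:ℝ)..π, Kper (u - v) * w (l + v) :=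
    (intervalIntegral.integral_add_adjacent_intervals (hint _ _) (hint _ _)).symm
  have h4 : (∫ v in (-π)..(0:ℝ), Kper (u - v) * w (l + v))
      = ∫ v in (0:ℝ)..π, -(Kper (u + v) * w (l + v)) := by
    have h := intervalIntegral.integral_comp_neg (a := (0:ℝ)) (b := π)
      (f := fun v => Kper (u - v) * w (l + v))
    rw [neg_zero] at h
    rw [← h]
    apply intervalIntegral.integral_congr
    intro v _
    show Kper (u - -v) * w (l + -v) = -(Kper (u + v) * w (l + v))
    rw [show u - -v = u + v by ring, show l + -v = l - v by ring, hodd v]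
    ring
  have h6 : (∫ v in (0:ℝ)..π, -(Kper (u + v) * w (l + v)))
      + (∫ v in (0:ℝ)..π, Kper (u - v) * w (l + v))
      = ∫ v in (0:ℝ)..π, (min u v - u * v / π) * w (l + v) := by
    rw [← intervalIntegral.integral_add (hint' 0 π) (hint 0 π)]
    apply intervalIntegral.integral_congr
    intro v hv
    rw [Set.uIcc_of_le (by positivity : (0:ℝ) ≤ π)] at hv
    have hd := Kper_diff hu0 huπ hv.1 hv.2
    show -(Kper (u + v) * w (l + v)) + Kper (u - v) * w (l + v)
        = (min u v - u * v / π) * w (l + v)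
    rw [show -(Kper (u + v) * w (l + v)) + Kper (u - v) * w (l + v)
        = (Kper (u - v) - Kper (u + v)) * w (l + v) by ring, hd]
  rw [h1, h2, h3, h4]
  exact h6

end BPL

set_option maxHeartbeats 2000000 in
theorem boundary_point_lemma_highest (F : ℝ → ℝ) (c : ℝ) (hc : 0 < c)
    (hF : ∀ x, AnalyticAt ℝ F x) (hF0 : F 0 = 0) (hF1 : deriv F 0 = -c)
    (B l : ℝ) (φ φt : ℝ → ℝ)
    (hφc : Continuous φ) (hφtc : Continuous φt)
    (hφp : Function.Periodic φ (2 * π)) (hφtp : Function.Periodic φt (2 * π))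
    (hφ0 : (∫ y in (-π)..π, φ y) = 0) (hφt0 : (∫ y in (-π)..π, φt y) = 0)
    (heq : ∀ x, F (φ x) = -(Kconv φ x) + B)
    (heqt : ∀ x, F (φt x) = -(Kconv φt x) + B)
    (hge : ∀ x ∈ Set.Icc l (l + π), φt x ≤ φ x)
    (hodd : ∀ x, φ (2 * l - x) - φt (2 * l - x) = -(φ x - φt x))
    (hval : φ l = φt l) (hvne : φ l ≠ 0) (hcrit : deriv F (φ l) = 0)
    (hhigher : ∃ m : ℕ, 2 ≤ m ∧ iteratedDeriv m F (φ l) ≠ 0)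
    (hextφ : ∃ δ > (0 : ℝ),
      (∀ x, 0 < |x - l| → |x - l| < δ → φ x < φ l) ∨
      (∀ x, 0 < |x - l| → |x - l| < δ → φ l < φ x))
    (hextφt : ∃ δ > (0 : ℝ),
      (∀ x, 0 < |x - l| → |x - l| < δ → φt x < φt l) ∨
      (∀ x, 0 < |x - l| → |x - l| < δ → φt l < φt x)) :
    ∀ x, φ x = φt x := by
  have hπ := Real.pi_pos
  -- the difference function
  set w : ℝ → ℝ := fun y => φ y - φt y with hw_def
  have hw_cont : Continuous w := hφc.sub hφtc
  have hw_per : Function.Periodic w (2 * π) := hφp.sub hφtp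
  have hw_odd : ∀ v : ℝ, w (l - v) = -w (l + v) := by
    intro v
    have h := hodd (l + v)
    rw [show 2 * l - (l + v) = l - v by ring] at h
    exact h
  have hw_nonneg : ∀ v, 0 ≤ v → v ≤ π → 0 ≤ w (l + v) := by
    intro v h0 h1
    have hmem : l + v ∈ Set.Icc l (l + π) := ⟨by linarith, by linarith⟩
    have := hge _ hmem
    simp only [hw_def]
    linarith
  -- difference of convolutions
  have hKconv_sub : ∀ x, Kconv φ x - Kconv φt x = ∫ y in (-π)..π, Kper (x - y) * w y := by
    intro x
    rw [Kconv, Kconv, ← intervalIntegral.integral_sub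
      (BPL.intervalIntegrable_Kper_mul hφc x _ _) (BPL.intervalIntegrable_Kper_mul hφtc x _ _)]
    apply intervalIntegral.integral_congr
    intro y _
    show Kper (x - y) * φ y - Kper (x - y) * φt y = Kper (x - y) * w y
    simp only [hw_def]
    ring
  -- H and its sign structure
  set H : ℝ → ℝ := fun t => F (φ l + t) - F (φ l) with hH_def
  have hFc : Continuous F := continuous_iff_continuousAt.mpr fun x => (hF x).continuousAt
  have hHcont : Continuous H := by
    exact (hFc.comp (continuous_const.add continuous_id)).sub continuous_const
  have hHanal : AnalyticAt ℝ H 0 := by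
    have h1 : AnalyticAt ℝ (fun t : ℝ => φ l + t) 0 := analyticAt_const.add analyticAt_id
    have h2 : AnalyticAt ℝ F ((fun t : ℝ => φ l + t) 0) := by simpa using hF (φ l)
    exact (h2.comp h1).sub analyticAt_const
  have hHne : ∀ᶠ t in nhdsWithin (0:ℝ) {(0:ℝ)}ᶜ, H t ≠ 0 := by
    rcases hHanal.eventually_eq_zero_or_eventually_ne_zero with h | h
    · exfalso
      obtain ⟨m, hm2, hmne⟩ := hhigher
      apply hmne
      have htend : Filter.Tendsto (fun s : ℝ => s - φ l) (nhds (φ l)) (nhds 0) := by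
        have h' := (continuous_id.sub (continuous_const (y := φ l))).tendsto (φ l)
        simpa [Pi.sub_def] using h'
      have hconst : F =ᶠ[nhds (φ l)] fun _ => F (φ l) := by
        filter_upwards [htend.eventually h] with s hs
        have h1 : F (φ l + (s - φ l)) - F (φ l) = 0 := hs
        have h2 : φ l + (s - φ l) = s := by ring
        rw [h2] at h1
        linarith
      obtain ⟨m', rfl⟩ : ∃ m', m = m' + 1 := ⟨m - 1, by omega⟩
      calc iteratedDeriv (m' + 1) F (φ l)
          = iteratedDeriv (m' + 1) (fun _ => F (φ l)) (φ l) := hconst.iteratedDeriv_eq _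
        _ = 0 := BPL.iteratedDeriv_const' m' (F (φ l)) (φ l)
    · exact h
  obtain ⟨ε, hε, hHneball⟩ : ∃ ε > (0:ℝ), ∀ t : ℝ, 0 < |t| → |t| < ε → H t ≠ 0 := by
    rw [eventually_nhdsWithin_iff] at hHne
    obtain ⟨ε, hε, hball⟩ := Metric.eventually_nhds_iff.mp hHne
    refine ⟨ε, hε, fun t ht0 htε => ?_⟩
    have h1 : dist t 0 < ε := by rwa [Real.dist_eq, sub_zero]
    exact hball h1 (Set.mem_compl_singleton_iff.mpr (abs_pos.mp ht0))
  have hsignP := BPL.same_sign_of_no_zero hHcont (a := 0) (b := ε)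
    (fun t ht => hHneball t (by rw [abs_of_pos ht.1]; exact ht.1)
      (by rw [abs_of_pos ht.1]; exact ht.2))
  have hsignN := BPL.same_sign_of_no_zero hHcont (a := -ε) (b := 0)
    (fun t ht => hHneball t (by rw [abs_of_neg ht.2]; linarith [ht.2])
      (by rw [abs_of_neg ht.2]; linarith [ht.1]))
  -- key lemma: derivative of convolution vanishes at l
  have keyC : ∀ (ψ : ℝ → ℝ) (A : ℝ), Continuous ψ →
      (∀ x, F (ψ x) = -(Kconv ψ x) + B) → ψ l = φ l →
      (∃ δ > (0 : ℝ),
        (∀ x, 0 < |x - l| → |x - l| < δ → ψ x < ψ l) ∨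
        (∀ x, 0 < |x - l| → |x - l| < δ → ψ l < ψ x)) →
      HasDerivAt (Kconv ψ) A l → A = 0 := by
    intro ψ A hψc hψeq hψl hext hA
    by_contra hA0
    obtain ⟨δe, hδe, hcase⟩ := hext
    set D : ℝ → ℝ := fun u => Kconv ψ l - Kconv ψ (l + u) with hD_def
    have hDH : ∀ u, D u = H (ψ (l + u) - φ l) := by
      intro u
      have h1 := hψeq (l + u)
      have h2 := hψeq l
      rw [hψl] at h2
      simp only [hD_def, hH_def]
      rw [show φ l + (ψ (l + u) - φ l) = ψ (l + u) by ring]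
      linarith
    have hDd : HasDerivAt D (-A) 0 := by
      have h1 : HasDerivAt (fun u : ℝ => l + u) 1 0 := by
        simpa using (hasDerivAt_id (0:ℝ)).const_add l
      have h2 : HasDerivAt (fun u : ℝ => Kconv ψ (l + u)) (A * 1) 0 := by
        have hA' : HasDerivAt (Kconv ψ) A ((fun u : ℝ => l + u) 0) := by simpa using hA
        exact HasDerivAt.comp 0 hA' h1
      have h3 := (hasDerivAt_const (0:ℝ) (Kconv ψ l)).sub h2
      simpa [Pi.sub_def] using h3
    have hslope : Filter.Tendsto (fun u => D u / u) (nhdsWithin 0 {(0:ℝ)}ᶜ) (nhds (-A)) := by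
      have h := hasDerivAt_iff_tendsto_slope.mp hDd
      apply h.congr
      intro u
      rw [slope_def_field]
      have hD0 : D 0 = 0 := by simp [hD_def]
      rw [hD0, sub_zero, sub_zero]
    have hsmall : ∀ᶠ u in nhds (0:ℝ), |ψ (l + u) - φ l| < ε := by
      have hp0 : ψ (l + 0) - φ l = 0 := by simp [hψl]
      have hpcont : Continuous fun u : ℝ => ψ (l + u) - φ l :=
        (hψc.comp (continuous_const.add continuous_id)).sub continuous_const
      have ht : Filter.Tendsto (fun u : ℝ => ψ (l + u) - φ l) (nhds 0) (nhds 0) := by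
        have := hpcont.tendsto 0
        rwa [hp0] at this
      have hmem := ht (Metric.ball_mem_nhds (0:ℝ) hε)
      filter_upwards [hmem] with u hu
      have : dist (ψ (l + u) - φ l) 0 < ε := hu
      rwa [Real.dist_eq, sub_zero] at this
    have hδsmall : ∀ᶠ u in nhds (0:ℝ), |u| < δe := by
      have hmem : Metric.ball (0:ℝ) δe ∈ nhds (0:ℝ) := Metric.ball_mem_nhds _ hδe
      filter_upwards [hmem] with u hu
      have : dist u 0 < δe := hu
      rwa [Real.dist_eq, sub_zero] at this
    have hratio : ∀ᶠ u in nhdsWithin (0:ℝ) {(0:ℝ)}ᶜ, |D u / u - (-A)| < |A| := by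
      have := Metric.tendsto_nhds.mp hslope |A| (abs_pos.mpr hA0)
      filter_upwards [this] with u hu
      rwa [Real.dist_eq] at hu
    have hall : ∀ᶠ u in nhdsWithin (0:ℝ) {(0:ℝ)}ᶜ,
        |D u / u - (-A)| < |A| ∧ |ψ (l + u) - φ l| < ε ∧ |u| < δe :=
      hratio.and ((hsmall.and hδsmall).filter_mono nhdsWithin_le_nhds)
    rw [eventually_nhdsWithin_iff] at hall
    obtain ⟨η, hη, hballη⟩ := Metric.eventually_nhds_iff.mp hall
    have huse : ∀ u : ℝ, u ≠ 0 → |u| < η →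
        |D u / u - (-A)| < |A| ∧ |ψ (l + u) - φ l| < ε ∧ |u| < δe := by
      intro u hu0 huη
      exact hballη (by rwa [Real.dist_eq, sub_zero]) (Set.mem_compl_singleton_iff.mpr hu0)
    set u₁ : ℝ := η / 2 with hu₁_def
    set u₂ : ℝ := -(η / 2) with hu₂_def
    have hu₁pos : 0 < u₁ := by positivity
    have hu₂neg : u₂ < 0 := by simp only [hu₂_def]; linarith
    have h₁ := huse u₁ (ne_of_gt hu₁pos) (by rw [abs_of_pos hu₁pos]; simp only [hu₁_def]; linarith)
    have h₂ := huse u₂ (ne_of_lt hu₂neg) (by rw [abs_of_neg hu₂neg]; simp only [hu₂_def]; linarith)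
    -- opposite signs of D
    have hopp : D u₁ * D u₂ < 0 := by
      have e₁ : D u₁ = (D u₁ / u₁) * u₁ := (div_mul_cancel₀ _ (ne_of_gt hu₁pos)).symm
      have e₂ : D u₂ = (D u₂ / u₂) * u₂ := (div_mul_cancel₀ _ (ne_of_lt hu₂neg)).symm
      rcases lt_or_gt_of_ne hA0 with hAneg | hApos
      · have habs : |A| = -A := abs_of_neg hAneg
        have hr₁ : 0 < D u₁ / u₁ := by
          have := h₁.1
          rw [habs] at this
          have := (abs_lt.mp this).1
          linarith
        have hr₂ : 0 < D u₂ / u₂ := by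
          have := h₂.1
          rw [habs] at this
          have := (abs_lt.mp this).1
          linarith
        have hD₁ : 0 < D u₁ := by rw [e₁]; exact mul_pos hr₁ hu₁pos
        have hD₂ : D u₂ < 0 := by rw [e₂]; exact mul_neg_of_pos_of_neg hr₂ hu₂neg
        exact mul_neg_of_pos_of_neg hD₁ hD₂
      · have habs : |A| = A := abs_of_pos hApos
        have hr₁ : D u₁ / u₁ < 0 := by
          have := h₁.1
          rw [habs] at this
          have := (abs_lt.mp this).2
          linarith
        have hr₂ : D u₂ / u₂ < 0 := by
          have := h₂.1
          rw [habs] at this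
          have := (abs_lt.mp this).2
          linarith
        have hD₁ : D u₁ < 0 := by rw [e₁]; exact mul_neg_of_neg_of_pos hr₁ hu₁pos
        have hD₂ : 0 < D u₂ := by rw [e₂]; exact mul_pos_of_neg_of_neg hr₂ hu₂neg
        exact mul_neg_of_neg_of_pos hD₁ hD₂
    -- but H has constant sign on the relevant side
    have hp₁ := h₁.2.1
    have hp₂ := h₂.2.1
    have harg₁ : l + u₁ - l = u₁ := by ring
    have harg₂ : l + u₂ - l = u₂ := by ring
    have habs₁ : 0 < |l + u₁ - l| := by rw [harg₁, abs_of_pos hu₁pos]; exact hu₁pos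
    have habs₂ : 0 < |l + u₂ - l| := by rw [harg₂, abs_of_neg hu₂neg]; linarith
    have habs₁' : |l + u₁ - l| < δe := by rw [harg₁]; exact h₁.2.2
    have habs₂' : |l + u₂ - l| < δe := by rw [harg₂]; exact h₂.2.2
    have hiff : (0 < D u₁ ↔ 0 < D u₂) := by
      rw [hDH u₁, hDH u₂]
      rcases hcase with hmax | hmin
      · have hq₁ : ψ (l + u₁) - φ l < 0 := by
          have := hmax (l + u₁) habs₁ habs₁'
          rw [hψl] at this
          linarith
        have hq₂ : ψ (l + u₂) - φ l < 0 := by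
          have := hmax (l + u₂) habs₂ habs₂'
          rw [hψl] at this
          linarith
        exact hsignN _ ⟨by linarith [(abs_lt.mp hp₁).1], hq₁⟩
          _ ⟨by linarith [(abs_lt.mp hp₂).1], hq₂⟩
      · have hq₁ : 0 < ψ (l + u₁) - φ l := by
          have := hmin (l + u₁) habs₁ habs₁'
          rw [hψl] at this
          linarith
        have hq₂ : 0 < ψ (l + u₂) - φ l := by
          have := hmin (l + u₂) habs₂ habs₂'
          rw [hψl] at this
          linarith
        exact hsignP _ ⟨hq₁, by linarith [(abs_lt.mp hp₁).2]⟩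
          _ ⟨hq₂, by linarith [(abs_lt.mp hp₂).2]⟩
    rcases lt_or_ge 0 (D u₁) with hpos | hle
    · have := hiff.mp hpos
      nlinarith
    · have : ¬ 0 < D u₂ := fun hc => absurd (hiff.mpr hc) (not_lt.mpr hle)
      push_neg at this
      nlinarith
  -- apply the key lemma to both solutions
  have hAφ := BPL.hasDerivAt_Kconv hφc l
  have hAφt := BPL.hasDerivAt_Kconv hφtc l
  have hAφ0 := keyC φ _ hφc heq rfl hextφ hAφ
  have hAφt0 := keyC φt _ hφtc heqt hval.symm hextφt hAφt
  rw [hAφ0] at hAφ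
  rw [hAφt0] at hAφt
  -- the difference of convolutions
  set Wf : ℝ → ℝ := fun x => Kconv φ x - Kconv φt x with hWf_def
  have hWf_d : HasDerivAt Wf 0 l := by
    have := hAφ.sub hAφt
    simpa [Pi.sub_def] using this
  have hWf0 : Wf l = 0 := by
    have h1 := heq l
    have h2 := heqt l
    rw [hval] at h1
    simp only [hWf_def]
    linarith
  have hWrep : ∀ u, 0 ≤ u → u ≤ π →
      Wf (l + u) = ∫ v in (0:ℝ)..π, (min u v - u * v / π) * w (l + v) := by
    intro u h0 h1
    have hsub : Wf (l + u) = ∫ y in (-π)..π, Kper (l + u - y) * w y := hKconv_sub (l + u)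
    rw [hsub]
    exact BPL.Wf_formula hw_cont hw_per hw_odd h0 h1
  -- all interior values of w on the right half-period vanish
  have hwz : ∀ v, 0 < v → v < π → w (l + v) = 0 := by
    intro v₀ hv₀0 hv₀π
    by_contra hne
    have hpos : 0 < w (l + v₀) :=
      lt_of_le_of_ne (hw_nonneg v₀ (le_of_lt hv₀0) (le_of_lt hv₀π)) (Ne.symm hne)
    set m : ℝ := w (l + v₀) / 2 with hm_def
    have hm : 0 < m := by positivity
    have hcont : ContinuousAt (fun v => w (l + v)) v₀ :=
      (hw_cont.comp (continuous_const.add continuous_id)).continuousAt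
    obtain ⟨η, hη0, hη⟩ : ∃ η > (0:ℝ), ∀ v, |v - v₀| < η → m < w (l + v) := by
      have hev : ∀ᶠ v in nhds v₀, m < w (l + v) := by
        have hmem := hcont.preimage_mem_nhds (isOpen_Ioi.mem_nhds
          (show m < w (l + v₀) by simp only [hm_def]; linarith))
        filter_upwards [hmem] with v hv
        exact hv
      obtain ⟨η, hη0, hb⟩ := Metric.eventually_nhds_iff.mp hev
      exact ⟨η, hη0, fun v hv => hb (by rwa [Real.dist_eq])⟩
    set η' : ℝ := min η (min (v₀/2) ((π - v₀)/2)) with hη'_def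
    have hη'0 : 0 < η' := lt_min hη0 (lt_min (by positivity) (by
      have : 0 < π - v₀ := by linarith
      positivity))
    set a : ℝ := v₀ - η'/2 with ha_def
    set b : ℝ := v₀ + η'/2 with hb_def
    have hη'v₀ : η' ≤ v₀/2 := le_trans (min_le_right _ _) (min_le_left _ _)
    have hη'π : η' ≤ (π - v₀)/2 := le_trans (min_le_right _ _) (min_le_right _ _)
    have hη'η : η' ≤ η := min_le_left _ _
    have ha0 : 0 < a := by simp only [ha_def]; linarith
    have hab : a < b := by simp only [ha_def, hb_def]; linarith
    have hbπ : b < π := by simp only [hb_def]; linarith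
    set c₀ : ℝ := (π - b)/π * m * (b - a) with hc₀_def
    have hc₀ : 0 < c₀ := by
      have h1 : 0 < π - b := by linarith
      have h2 : 0 < b - a := by linarith
      positivity
    -- lower bound for Wf (l + u) when u is small positive
    have hlow : ∀ u, 0 < u → u ≤ a → c₀ * u ≤ Wf (l + u) := by
      intro u hu0 hua
      have huπ' : u ≤ π := by linarith
      rw [hWrep u (le_of_lt hu0) huπ']
      have hintc : ∀ a' b' : ℝ,
          IntervalIntegrable (fun v => (min u v - u*v/π) * w (l + v)) volume a' b' := by
        intro a' b'
        apply Continuous.intervalIntegrable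
        exact ((continuous_const.min continuous_id).sub
          ((continuous_const.mul continuous_id).div_const π)).mul
          (hw_cont.comp (continuous_const.add continuous_id))
      have e1 := intervalIntegral.integral_add_adjacent_intervals (hintc a b) (hintc b π)
      have e2 := intervalIntegral.integral_add_adjacent_intervals (hintc 0 a) (hintc a π)
      have hn1 : 0 ≤ ∫ v in (0:ℝ)..a, (min u v - u*v/π) * w (l + v) := by
        apply intervalIntegral.integral_nonneg (le_of_lt ha0)
        intro v hv
        exact mul_nonneg (BPL.gker_nonneg (le_of_lt hu0) huπ' hv.1 (by linarith [hv.2]))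
          (hw_nonneg v hv.1 (by linarith [hv.2]))
      have hn3 : 0 ≤ ∫ v in b..π, (min u v - u*v/π) * w (l + v) := by
        apply intervalIntegral.integral_nonneg (le_of_lt hbπ)
        intro v hv
        have hv0 : 0 ≤ v := by linarith [hv.1]
        exact mul_nonneg (BPL.gker_nonneg (le_of_lt hu0) huπ' hv0 hv.2)
          (hw_nonneg v hv0 hv.2)
      have hmid : ((π - b)/π * m) * u * (b - a) ≤ ∫ v in a..b, (min u v - u*v/π) * w (l + v) := by
        have hptw : ∀ v ∈ Set.Icc a b, ((π - b)/π * m) * u ≤ (min u v - u*v/π) * w (l + v) := by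
          intro v hv
          have huv : u ≤ v := le_trans hua hv.1
          have hvb : v ≤ b := hv.2
          have hkeq : min u v - u*v/π = u * (π - v) / π := by
            rw [min_eq_left huv]
            field_simp
          have hk1 : u * (π - b) / π ≤ min u v - u*v/π := by
            rw [hkeq]
            exact (div_le_div_iff_of_pos_right hπ).mpr
              (mul_le_mul_of_nonneg_left (by linarith) (le_of_lt hu0))
          have hwv : m < w (l + v) := by
            apply hη
            rw [abs_lt]
            have hv1 : a ≤ v := hv.1
            have hv2 : v ≤ b := hv.2
            simp only [ha_def] at hv1
            simp only [hb_def] at hv2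
            constructor <;> linarith
          have hknn : 0 ≤ min u v - u*v/π :=
            BPL.gker_nonneg (le_of_lt hu0) huπ' (by linarith) (by linarith)
          calc ((π - b)/π * m) * u = (u * (π - b) / π) * m := by ring
            _ ≤ (min u v - u*v/π) * m := mul_le_mul_of_nonneg_right hk1 (le_of_lt hm)
            _ ≤ (min u v - u*v/π) * w (l + v) :=
                mul_le_mul_of_nonneg_left (le_of_lt hwv) hknn
        have hmono := intervalIntegral.integral_mono_on (le_of_lt hab)
          intervalIntegrable_const (hintc a b) hptw
        rw [intervalIntegral.integral_const, smul_eq_mul] at hmono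
        calc ((π - b)/π * m) * u * (b - a) = (b - a) * (((π - b)/π * m) * u) := by ring
          _ ≤ _ := hmono
      have hcu : c₀ * u = ((π - b)/π * m) * u * (b - a) := by
        simp only [hc₀_def]; ring
      linarith
    -- contradiction with vanishing derivative of Wf at l
    have hWl : HasDerivAt (fun u => Wf (l + u)) ((0:ℝ) * 1) 0 := by
      have h1 : HasDerivAt (fun u : ℝ => l + u) 1 0 := by
        simpa using (hasDerivAt_id (0:ℝ)).const_add l
      have hW' : HasDerivAt Wf 0 ((fun u : ℝ => l + u) 0) := by simpa using hWf_d
      exact HasDerivAt.comp 0 hW' h1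
    have hsl : Filter.Tendsto (fun u => Wf (l + u) / u) (nhdsWithin 0 {(0:ℝ)}ᶜ) (nhds 0) := by
      have h := hasDerivAt_iff_tendsto_slope.mp hWl
      rw [show (0:ℝ) * 1 = 0 by ring] at h
      apply h.congr
      intro u
      have hf0 : Wf (l + 0) = 0 := by rw [add_zero]; exact hWf0
      rw [slope_def_field, hf0, sub_zero, sub_zero]
    have hev := Metric.tendsto_nhds.mp hsl c₀ hc₀
    rw [eventually_nhdsWithin_iff] at hev
    obtain ⟨η₂, hη₂, hb₂⟩ := Metric.eventually_nhds_iff.mp hev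
    set u : ℝ := min (η₂/2) a with hu_def
    have hu0 : 0 < u := lt_min (by positivity) ha0
    have hu1 : u ≤ a := min_le_right _ _
    have hu2 : dist u 0 < η₂ := by
      rw [Real.dist_eq, sub_zero, abs_of_pos hu0]
      calc u ≤ η₂/2 := min_le_left _ _
        _ < η₂ := by linarith
    have h1 := hb₂ hu2 (Set.mem_compl_singleton_iff.mpr (ne_of_gt hu0))
    rw [Real.dist_eq, sub_zero] at h1
    have h2 := hlow u hu0 hu1
    have h3 : c₀ ≤ Wf (l + u) / u := by
      rw [le_div_iff₀ hu0]
      linarith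
    have h4 := le_abs_self (Wf (l + u) / u)
    linarith
  -- extend to the closed interval and then everywhere
  have hwz' : ∀ x, l ≤ x → x ≤ l + π → w x = 0 := by
    have hEq : Set.EqOn w (fun _ => (0:ℝ)) (Set.Ioo l (l + π)) := by
      intro x hx
      have hz := hwz (x - l) (by linarith [hx.1]) (by linarith [hx.2])
      rw [show l + (x - l) = x by ring] at hz
      exact hz
    have hcl := hEq.closure hw_cont continuous_const
    rw [closure_Ioo (by linarith : l ≠ l + π)] at hcl
    intro x h1 h2
    exact hcl ⟨h1, h2⟩
  have hwz2 : ∀ x, l - π ≤ x → x ≤ l + π → w x = 0 := by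
    intro x h1 h2
    rcases le_total l x with h | h
    · exact hwz' x h h2
    · have hz := hwz' (l + (l - x)) (by linarith) (by linarith)
      have ho := hw_odd (l - x)
      rw [show l - (l - x) = x by ring] at ho
      rw [ho, hz, neg_zero]
  intro x
  have hzero : w x = 0 := by
    set t : ℝ := (x - (l - π)) / (2 * π) with ht_def
    set k : ℤ := ⌊t⌋ with hk_def
    have h2π : (0:ℝ) < 2*π := by positivity
    have hx_eq : x = (l - π) + 2 * π * t := by
      simp only [ht_def]
      field_simp
      ring
    have hf1 : (k:ℝ) ≤ t := Int.floor_le t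
    have hf2 : t < k + 1 := Int.lt_floor_add_one t
    have hb1 : 0 ≤ 2*π*(t - k) := mul_nonneg (le_of_lt h2π) (by linarith)
    have hb2 : 2*π*(t - k) < 2*π := by
      have h' : 2*π*(t - k) < 2*π*1 := by
        apply mul_lt_mul_of_pos_left _ h2π
        linarith
      linarith
    have he : x - 2*π*k = (l - π) + 2*π*(t - k) := by rw [hx_eq]; ring
    have hz : w (x - 2*π*k) = 0 := by
      apply hwz2
      · rw [he]; linarith
      · rw [he]; linarith
    have hper' : w (x - k • (2*π)) = w x := hw_per.sub_zsmul_eq k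
    rw [show x - k • (2*π) = x - 2*π*k by rw [zsmul_eq_mul]; ring] at hper'
    rw [← hper']
    exact hz
  have hfin : φ x - φt x = 0 := hzero
  linarith
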